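/- arXiv:1903.06558 — 2 statements merged into one kernel-verified Lean document; each statement's English description precedes it below -/
import Mathlib

section
/- For real x with 0 < x ≤ 1, the function f(y) = (1/2)log(1-y²) + y - log(1+y) evaluated at y = √(1-x²) satisfies f(√(1-x²)) ≤ -(1/3)(1-x²)^{3/2}. Equivalently, log x + √(1-x²) - log(1+√(1-x²)) ≤ -(1/3)(1-x²)^{3/2}. -/
private lemma key_ineq (y : ℝ) (hy0 : 0 ≤ y) (hy1 : y < 1) :
    Real.log (1 - y) - Real.log (1 + y) + 2 * y + 2 / 3 * y ^ 3 ≤ 0 := by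
  set f : ℝ → ℝ := fun t => Real.log (1 + t) - Real.log (1 - t) - 2 * t - 2 / 3 * t ^ 3 with hf
  have hd : ∀ t ∈ Set.Ioo (0:ℝ) 1,
      HasDerivAt f ((1 + t)⁻¹ + (1 - t)⁻¹ - 2 - 2 * t ^ 2) t := by
    intro t ht
    have h1 : (1:ℝ) + t ≠ 0 := by nlinarith [ht.1]
    have h2 : (1:ℝ) - t ≠ 0 := by nlinarith [ht.2]
    have d1 : HasDerivAt (fun t : ℝ => Real.log (1 + t)) ((1 + t)⁻¹) t := by
      have := (((hasDerivAt_id t).const_add 1).log h1)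
      simpa using this
    have d2 : HasDerivAt (fun t : ℝ => Real.log (1 - t)) (-(1 - t)⁻¹) t := by
      have := (((hasDerivAt_id t).const_sub 1).log h2)
      simpa [div_eq_mul_inv] using this
    have d3 : HasDerivAt (fun t : ℝ => 2 * t) 2 t := by
      simpa using (hasDerivAt_id t).const_mul 2
    have d4 : HasDerivAt (fun t : ℝ => 2 / 3 * t ^ 3) (2 / 3 * (3 * t ^ 2)) t := by
      simpa using ((hasDerivAt_pow 3 t).const_mul (2/3 : ℝ))
    have := ((d1.sub d2).sub d3).sub d4
    refine this.congr_deriv ?_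
    ring
  have hcont : ContinuousOn f (Set.Ico (0:ℝ) 1) := by
    have hc1 : ContinuousOn (fun t : ℝ => Real.log (1 + t)) (Set.Ico 0 1) :=
      ContinuousOn.log (by fun_prop) (fun t ht => ne_of_gt (by nlinarith [ht.1]))
    have hc2 : ContinuousOn (fun t : ℝ => Real.log (1 - t)) (Set.Ico 0 1) :=
      ContinuousOn.log (by fun_prop) (fun t ht => ne_of_gt (by nlinarith [ht.2]))
    exact ((hc1.sub hc2).sub (by fun_prop)).sub (by fun_prop)
  have hmono : MonotoneOn f (Set.Ico (0:ℝ) 1) := by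
    apply monotoneOn_of_deriv_nonneg (convex_Ico 0 1) hcont
    · intro t ht
      rw [interior_Ico] at ht
      exact (hd t ht).differentiableAt.differentiableWithinAt
    · intro t ht
      rw [interior_Ico] at ht
      rw [(hd t ht).deriv]
      have h1 : (0:ℝ) < 1 + t := by nlinarith [ht.1]
      have h2 : (0:ℝ) < 1 - t := by nlinarith [ht.2]
      have heq : (1 + t)⁻¹ + (1 - t)⁻¹ - 2 - 2 * t ^ 2 = 2 * t ^ 4 / ((1 + t) * (1 - t)) := by
        field_simp
        ring
      rw [heq]
      positivity
  have h0 : f 0 = 0 := by simp [hf]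
  have := hmono (Set.mem_Ico.mpr ⟨le_refl 0, one_pos⟩) (Set.mem_Ico.mpr ⟨hy0, hy1⟩) hy0
  rw [h0] at this
  simp only [hf] at this
  linarith

theorem stmt_8 (x : ℝ) (hx0 : 0 < x) (hx1 : x ≤ 1) :
    Real.log x + Real.sqrt (1 - x ^ 2) - Real.log (1 + Real.sqrt (1 - x ^ 2)) ≤
      -(1 / 3) * (1 - x ^ 2) ^ ((3 : ℝ) / 2) := by
  set y := Real.sqrt (1 - x ^ 2) with hy
  have hx2 : 0 ≤ 1 - x ^ 2 := by nlinarith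
  have hy0 : 0 ≤ y := Real.sqrt_nonneg _
  have hysq : y ^ 2 = 1 - x ^ 2 := Real.sq_sqrt hx2
  have hy1 : y < 1 := by
    nlinarith [hysq, hy0]
  -- rewrite the rpow
  have hrpow : (1 - x ^ 2) ^ ((3 : ℝ) / 2) = y ^ 3 := by
    have h1 : (1 - x ^ 2) ^ ((3:ℝ)/2) = ((1 - x ^ 2) ^ ((1:ℝ)/2)) ^ (3:ℕ) := by
      rw [← Real.rpow_natCast ((1 - x ^ 2) ^ ((1:ℝ)/2)) 3, ← Real.rpow_mul hx2]
      norm_num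
    rw [h1, hy, Real.sqrt_eq_rpow]
  have h1y : (0:ℝ) < 1 - y := by linarith
  have h2y : (0:ℝ) < 1 + y := by linarith
  have hlogx : Real.log x = (Real.log (1 - y) + Real.log (1 + y)) / 2 := by
    have hx2eq : x ^ 2 = (1 - y) * (1 + y) := by nlinarith [hysq]
    have : Real.log (x ^ 2) = Real.log (1 - y) + Real.log (1 + y) := by
      rw [hx2eq, Real.log_mul (ne_of_gt h1y) (ne_of_gt h2y)]
    rw [Real.log_pow] at this
    push_cast at this
    linarith
  have hkey := key_ineq y hy0 hy1
  rw [hrpow, hlogx]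
  linarith
end

section
/- For the Bessel function J_m with m ≥ 0 and 0 < x ≤ 1, the bound log|J_m(mx)| ≤ m(log x + √(1-x²) - log(1+√(1-x²))) implies |J_m(mx)| ≤ exp(-(m/3)(1-x²)^{3/2}). -/
/-- The Bessel function of the first kind of (real) order `m`, defined by its
power series `J_m(u) = ∑_{k≥0} (-1)^k / (k! Γ(m+k+1)) (u/2)^{2k+m}`,
using real powers of `u/2`. -/
noncomputable def besselJ (m u : ℝ) : ℝ :=
  ∑' k : ℕ, ((-1) ^ k / (Nat.factorial k * Real.Gamma (m + k + 1))) *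
    (u / 2) ^ (2 * k + m : ℝ)

lemma artanh_aux (s : ℝ) (hs0 : 0 ≤ s) (hs1 : s < 1) :
    2 * s + 2 / 3 * s ^ 3 ≤ Real.log (1 + s) - Real.log (1 - s) := by
  set f : ℝ → ℝ := fun t => Real.log (1 + t) - Real.log (1 - t) - 2 * t - 2 / 3 * t ^ 3
    with hf
  have hderiv : ∀ t ∈ Set.Ioo (0 : ℝ) 1,
      HasDerivAt f (1 / (1 + t) - -1 / (1 - t) - 2 - 2 / 3 * (3 * t ^ 2)) t := by
    intro t ht
    have ht0 : (0 : ℝ) < 1 + t := by nlinarith [ht.1]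
    have ht1 : (0 : ℝ) < 1 - t := by nlinarith [ht.2]
    have h1 : HasDerivAt (fun u : ℝ => Real.log (1 + u)) (1 / (1 + t)) t := by
      have := ((hasDerivAt_id t).const_add 1).log ht0.ne'
      simpa using this
    have h2 : HasDerivAt (fun u : ℝ => Real.log (1 - u)) (-1 / (1 - t)) t := by
      have := ((hasDerivAt_id t).const_sub 1).log ht1.ne'
      simpa using this
    exact (((h1.sub h2).sub (by simpa using (hasDerivAt_id t).const_mul 2)).sub
      (by simpa using (hasDerivAt_pow 3 t).const_mul (2/3)))
  have hmono : MonotoneOn f (Set.Ico (0 : ℝ) 1) := by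
    apply monotoneOn_of_deriv_nonneg (convex_Ico 0 1)
    · apply ContinuousOn.sub
      apply ContinuousOn.sub
      apply ContinuousOn.sub
      · refine (continuousOn_const.add continuousOn_id).log (fun t ht => ?_)
        simp only [Set.mem_Ico] at ht
        simp only [Pi.add_apply, Pi.sub_apply, id_eq]
        intro hc; nlinarith [ht.1]
      · refine (continuousOn_const.sub continuousOn_id).log (fun t ht => ?_)
        simp only [Set.mem_Ico] at ht
        simp only [Pi.add_apply, Pi.sub_apply, id_eq]
        intro hc; nlinarith [ht.2]
      · exact continuousOn_const.mul continuousOn_id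
      · exact continuousOn_const.mul (continuousOn_pow 3)
    · rw [interior_Ico]
      exact fun t ht => ((hderiv t ht).differentiableAt.differentiableWithinAt)
    · rw [interior_Ico]
      intro t ht
      rw [(hderiv t ht).deriv]
      have ht0 : (0 : ℝ) < 1 + t := by nlinarith [ht.1]
      have ht1 : (0 : ℝ) < 1 - t := by nlinarith [ht.2]
      have key : (2 + 2 * t ^ 2) * ((1 + t) * (1 - t)) ≤ 2 := by nlinarith [sq_nonneg (t^2)]
      have hden : (0 : ℝ) < (1 + t) * (1 - t) := mul_pos ht0 ht1
      have hsum : 1 / (1 + t) - -1 / (1 - t) = 2 / ((1 + t) * (1 - t)) := by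
        field_simp; ring
      rw [hsum]
      have : 2 + 2 * t ^ 2 ≤ 2 / ((1 + t) * (1 - t)) := (le_div_iff₀ hden).mpr key
      linarith
  have h0 : (0 : ℝ) ∈ Set.Ico (0 : ℝ) 1 := by constructor <;> norm_num
  have hsmem : s ∈ Set.Ico (0 : ℝ) 1 := ⟨hs0, hs1⟩
  have hle := hmono h0 hsmem hs0
  have hf0 : f 0 = 0 := by simp [hf]
  rw [hf0] at hle
  simp only [hf] at hle
  linarith

theorem stmt_19 (m : ℝ) (hm : 0 ≤ m) (x : ℝ) (hx0 : 0 < x) (hx1 : x ≤ 1)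
    (h : Real.log |besselJ m (m * x)| ≤
        m * (Real.log x + Real.sqrt (1 - x ^ 2) -
          Real.log (1 + Real.sqrt (1 - x ^ 2)))) :
    |besselJ m (m * x)| ≤ Real.exp (-(m / 3) * (1 - x ^ 2) ^ ((3 : ℝ) / 2)) := by
  have h1x : (0 : ℝ) ≤ 1 - x ^ 2 := by nlinarith
  set s := Real.sqrt (1 - x ^ 2) with hs
  have hs2 : s ^ 2 = 1 - x ^ 2 := Real.sq_sqrt h1x
  have hs0 : 0 ≤ s := Real.sqrt_nonneg _
  have hs1 : s < 1 := by nlinarith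
  have hx2 : x ^ 2 = (1 - s) * (1 + s) := by nlinarith
  have logx : Real.log x = (Real.log (1 - s) + Real.log (1 + s)) / 2 := by
    have h2 : Real.log (x ^ 2) = 2 * Real.log x := by
      rw [Real.log_pow]; push_cast; ring
    have h3 : Real.log (x ^ 2) = Real.log (1 - s) + Real.log (1 + s) := by
      rw [hx2, Real.log_mul (by nlinarith) (by nlinarith)]
    linarith
  have key := artanh_aux s hs0 hs1
  have hbound : Real.log x + s - Real.log (1 + s) ≤ -(1/3) * s ^ 3 := by
    rw [logx]; linarith
  have hrpow : (1 - x ^ 2) ^ ((3 : ℝ) / 2) = s ^ 3 := by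
    rw [show ((3 : ℝ) / 2) = (1 / 2 : ℝ) * 3 by norm_num, Real.rpow_mul h1x,
      show (3 : ℝ) = ((3 : ℕ) : ℝ) by norm_num, Real.rpow_natCast,
      ← Real.sqrt_eq_rpow]
  have hfinal : m * (Real.log x + s - Real.log (1 + s)) ≤
      -(m / 3) * (1 - x ^ 2) ^ ((3 : ℝ) / 2) := by
    rw [hrpow]
    calc m * (Real.log x + s - Real.log (1 + s)) ≤ m * (-(1/3) * s ^ 3) :=
          mul_le_mul_of_nonneg_left hbound hm
      _ = -(m / 3) * s ^ 3 := by ring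
  rcases eq_or_lt_of_le (abs_nonneg (besselJ m (m * x))) with hJ | hJ
  · rw [← hJ]; exact (Real.exp_pos _).le
  · calc |besselJ m (m * x)| = Real.exp (Real.log |besselJ m (m * x)|) :=
          (Real.exp_log hJ).symm
      _ ≤ Real.exp (-(m / 3) * (1 - x ^ 2) ^ ((3 : ℝ) / 2)) :=
          Real.exp_le_exp.mpr (h.trans hfinal)
end
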